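/- arXiv:1304.5310 — 2 statements merged into one kernel-verified Lean document; each statement's English description precedes it below -/
import Mathlib

section
/- (Upper bound via modified double summation form.) λ_0 ≤ inf_{f ∈ F̃_{II}} sup_{i∈T\{0}} II_i(f)^{-1}, where F̃_{II} = {f > 0 : f_0 = 0 and there exists 1 ≤ n < N+1 with f_i = f_{i*} for all |i| ≥ n+1}. More precisely, for each such f, setting g_i = f_i II_i(f) for |i| ≤ n and g_i = g_{i*} for |i| ≥ n+1, one has D(g) = Σ_{k∈T\{0}} μ_k f_k g_k and hence λ_0 ≤ D(g)/μ(g²) ≤ sup_{k∈T\{0}} II_k(f)^{-1}. -/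
open Finset
open scoped Classical

structure BDTree (V : Type*) [Fintype V] where
  root : V
  parent : V → V
  layer : V → ℕ
  q : V → V → ℝ
  parent_root : parent root = root
  layer_root : layer root = 0
  layer_parent : ∀ i, i ≠ root → layer i = layer (parent i) + 1
  reach : ∀ i, ∃ n, parent^[n] i = root
  q_pos_up : ∀ i, i ≠ root → 0 < q i (parent i)
  q_pos_down : ∀ i, i ≠ root → 0 < q (parent i) i

namespace BDTree

variable {V : Type*} [Fintype V] (T : BDTree V)

/-- The set of sons of a vertex. -/
noncomputable def sons (i : V) : Finset V :=
  Finset.univ.filter fun j => j ≠ T.root ∧ T.parent j = i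

/-- The subtree `T_k` rooted at `k` (including `k`). -/
noncomputable def subtree (k : V) : Finset V :=
  Finset.univ.filter fun j => ∃ n, T.parent^[n] j = k

/-- The path set `P(i)`: vertices (excluding the root) on the path from `i` to the root. -/
noncomputable def pathSet (i : V) : Finset V :=
  Finset.univ.filter fun k => k ≠ T.root ∧ ∃ n, T.parent^[n] i = k

/-- The symmetric measure `μ`. -/
noncomputable def mu (k : V) : ℝ :=
  ∏ j ∈ T.pathSet k, T.q (T.parent j) j / T.q j (T.parent j)

/-- The operator `Ω`. -/
noncomputable def Omega (g : V → ℝ) (i : V) : ℝ :=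
  (∑ j ∈ T.sons i, T.q i j * (g j - g i)) + T.q i (T.parent i) * (g (T.parent i) - g i)

/-- The set of non-root vertices `T \ {0}`. -/
noncomputable def nonroot : Finset V := Finset.univ.filter fun i => i ≠ T.root

/-- The Dirichlet form `D(f)`. -/
noncomputable def D (f : V → ℝ) : ℝ :=
  ∑ i ∈ T.nonroot, T.mu i * T.q i (T.parent i) * (f i - f (T.parent i)) ^ 2

/-- `μ(f²)`. -/
noncomputable def norm2 (f : V → ℝ) : ℝ := ∑ i ∈ T.nonroot, T.mu i * f i ^ 2

/-- The principal Dirichlet eigenvalue `λ₀`, via the classical variational formula. -/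
noncomputable def lam0 : ℝ := sInf {r | ∃ f : V → ℝ, f T.root = 0 ∧ T.norm2 f = 1 ∧ r = T.D f}

/-- The single-summation operator `I`. -/
noncomputable def opI (f : V → ℝ) (i : V) : ℝ :=
  (∑ j ∈ T.subtree i, T.mu j * f j) /
    (T.mu i * T.q i (T.parent i) * (f i - f (T.parent i)))

/-- The double-summation operator `II`. -/
noncomputable def opII (f : V → ℝ) (i : V) : ℝ :=
  (∑ k ∈ T.pathSet i, (1 / (T.mu k * T.q k (T.parent k))) *
      ∑ j ∈ T.subtree k, T.mu j * f j) / f i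

/-- The difference-form operator `R`; at a son of the root the convention `w_0 = ∞`,
`1/∞ = 0` is used, i.e. the term `w i⁻¹` is replaced by `0`. -/
noncomputable def R (w : V → ℝ) (i : V) : ℝ :=
  T.q i (T.parent i) * (1 - (if T.parent i = T.root then 0 else (w i)⁻¹)) +
    ∑ j ∈ T.sons i, T.q i j * (1 - w j)

/-- Membership in the test-function class `W = {w : w > 1, w_0 = ∞}` (the value at a son
of the root plays the role of `∞` and is not used by `R`). -/
def memW (w : V → ℝ) : Prop := ∀ i, i ≠ T.root → T.parent i ≠ T.root → 1 < w i

/-- `φ_j = Σ_{k∈P(j)} 1/(μ_k q_{kk*})`. -/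
noncomputable def phi (j : V) : ℝ :=
  ∑ k ∈ T.pathSet j, 1 / (T.mu k * T.q k (T.parent k))

end BDTree

namespace BDTree

variable {V : Type*} [Fintype V] (T : BDTree V)

lemma iterate_root (m : ℕ) : T.parent^[m] T.root = T.root := by
  induction m with
  | zero => rfl
  | succ m ih => rw [Function.iterate_succ_apply', ih, T.parent_root]

lemma layer_iterate : ∀ (m : ℕ) (j : V), T.parent^[m] j ≠ T.root →
    T.layer (T.parent^[m] j) + m = T.layer j := by
  intro m
  induction m with
  | zero => intro j _; rfl
  | succ m ih =>
      intro j h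
      rw [Function.iterate_succ_apply'] at h ⊢
      have hm : T.parent^[m] j ≠ T.root := by
        intro he; rw [he, T.parent_root] at h; exact h rfl
      have h1 := T.layer_parent _ hm
      have h2 := ih j hm
      omega

lemma mem_pathSet_self {i : V} (hi : i ≠ T.root) : i ∈ T.pathSet i := by
  simp [pathSet, hi]; exact ⟨0, rfl⟩

lemma pathSet_root : T.pathSet T.root = ∅ := by
  ext k
  simp only [pathSet, Finset.mem_filter, Finset.mem_univ, true_and, Finset.notMem_empty,
    iff_false, not_and]
  rintro hk ⟨m, hm⟩
  exact hk (by rw [T.iterate_root] at hm; exact hm.symm)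

lemma layer_pos {i : V} (hi : i ≠ T.root) : 1 ≤ T.layer i := by
  rw [T.layer_parent i hi]; omega

lemma root_of_layer_zero {i : V} (h : T.layer i = 0) : i = T.root := by
  by_contra hi; have := T.layer_pos hi; omega

lemma mu_pos (k : V) : 0 < T.mu k := by
  apply Finset.prod_pos
  intro j hj
  have hj' : j ≠ T.root := by
    simp only [pathSet, Finset.mem_filter] at hj; exact hj.2.1
  exact div_pos (T.q_pos_down j hj') (T.q_pos_up j hj')

lemma not_mem_pathSet_parent {i : V} (hi : i ≠ T.root) : i ∉ T.pathSet (T.parent i) := by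
  simp only [pathSet, Finset.mem_filter, Finset.mem_univ, true_and, not_and]
  rintro _ ⟨m, hm⟩
  have hm' : T.parent^[m + 1] i = i := by
    rw [Function.iterate_succ_apply]; exact hm
  have := T.layer_iterate (m + 1) i (by rw [hm']; exact hi)
  rw [hm'] at this; omega

lemma pathSet_insert {i : V} (hi : i ≠ T.root) :
    T.pathSet i = insert i (T.pathSet (T.parent i)) := by
  ext k
  simp only [pathSet, Finset.mem_filter, Finset.mem_univ, true_and, Finset.mem_insert]
  constructor
  · rintro ⟨hk, m, hm⟩
    cases m with
    | zero => exact Or.inl hm.symm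
    | succ m => exact Or.inr ⟨hk, m, by rw [Function.iterate_succ_apply] at hm; exact hm⟩
  · rintro (rfl | ⟨hk, m, hm⟩)
    · exact ⟨hi, 0, rfl⟩
    · exact ⟨hk, m + 1, by rw [Function.iterate_succ_apply]; exact hm⟩

lemma mem_subtree_iff {l : V} (hl : l ≠ T.root) (k : V) :
    k ∈ T.subtree l ↔ l ∈ T.pathSet k := by
  simp [subtree, pathSet, hl]

lemma root_not_mem_subtree {l : V} (hl : l ≠ T.root) : T.root ∉ T.subtree l := by
  simp only [subtree, Finset.mem_filter, Finset.mem_univ, true_and, not_exists]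
  intro m hm
  rw [T.iterate_root] at hm; exact hl hm.symm

lemma ne_root_of_mem_subtree {l j : V} (hl : l ≠ T.root) (hj : j ∈ T.subtree l) :
    j ≠ T.root := by
  rintro rfl; exact T.root_not_mem_subtree hl hj

lemma ne_root_of_mem_pathSet {k l : V} (hl : l ∈ T.pathSet k) : l ≠ T.root := by
  simp only [pathSet, Finset.mem_filter] at hl; exact hl.2.1

lemma layer_le_of_mem_pathSet {k l : V} (hl : l ∈ T.pathSet k) :
    T.layer l ≤ T.layer k := by
  simp only [pathSet, Finset.mem_filter, Finset.mem_univ, true_and] at hl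
  obtain ⟨hl', m, hm⟩ := hl
  have := T.layer_iterate m k (by rw [hm]; exact hl')
  rw [hm] at this; omega

lemma pathSet_subset_parent {i : V} (hi : i ≠ T.root) :
    T.pathSet (T.parent i) ⊆ T.pathSet i := by
  rw [T.pathSet_insert hi]; exact Finset.subset_insert _ _

lemma exists_layer_one : ∀ (m : ℕ) (k : V), k ≠ T.root → T.layer k ≤ m →
    ∃ l ∈ T.pathSet k, T.layer l = 1 := by
  intro m
  induction m with
  | zero => intro k hk h0; have := T.layer_pos hk; omega
  | succ m ih =>
      intro k hk hkm
      by_cases hp : T.parent k = T.root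
      · exact ⟨k, T.mem_pathSet_self hk, by rw [T.layer_parent k hk, hp, T.layer_root]⟩
      · obtain ⟨l, hl, hl1⟩ := ih (T.parent k) hp (by have := T.layer_parent k hk; omega)
        exact ⟨l, T.pathSet_subset_parent hk hl, hl1⟩

end BDTree

/-- upper bound via the modified double summation form. -/
theorem stmt8 {V : Type*} [Fintype V] (T : BDTree V) (hne : T.nonroot.Nonempty)
    (f : V → ℝ) (hf0 : f T.root = 0) (hfpos : ∀ i, i ≠ T.root → 0 < f i)
    (n : ℕ) (hn : 1 ≤ n) (hfn : ∀ i, n + 1 ≤ T.layer i → f i = f (T.parent i))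
    (g : V → ℝ)
    (hg1 : ∀ i, T.layer i ≤ n → g i = f i * T.opII f i)
    (hg2 : ∀ i, n + 1 ≤ T.layer i → g i = g (T.parent i)) :
    T.D g = (∑ k ∈ T.nonroot, T.mu k * f k * g k) ∧
    T.lam0 ≤ T.D g / T.norm2 g ∧
    T.D g / T.norm2 g ≤ (T.nonroot.sup' hne fun k => (T.opII f k)⁻¹) ∧
    T.lam0 ≤ T.nonroot.sup' hne fun k => (T.opII f k)⁻¹ := by
  classical
  set M := T.nonroot.sup' hne fun k => (T.opII f k)⁻¹ with hM
  set A : V → ℝ := fun l => ∑ j ∈ T.subtree l, T.mu j * f j with hA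
  set c : V → ℝ := fun l => A l / (T.mu l * T.q l (T.parent l)) with hc
  have hApos : ∀ l, l ≠ T.root → 0 < A l := by
    intro l hl
    apply Finset.sum_pos'
    · intro j hj
      exact le_of_lt (mul_pos (T.mu_pos j) (hfpos j (T.ne_root_of_mem_subtree hl hj)))
    · refine ⟨l, ?_, mul_pos (T.mu_pos l) (hfpos l hl)⟩
      simp only [BDTree.subtree, Finset.mem_filter, Finset.mem_univ, true_and]
      exact ⟨0, rfl⟩
  have hcpos : ∀ l, l ≠ T.root → 0 < c l := fun l hl =>
    div_pos (hApos l hl) (mul_pos (T.mu_pos l) (T.q_pos_up l hl))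
  have hopII : ∀ k, T.opII f k = (∑ l ∈ T.pathSet k, c l) / f k := by
    intro k
    unfold BDTree.opII
    congr 1
    refine Finset.sum_congr rfl fun l _ => ?_
    simp only [hc, hA]
    rw [one_div_mul_eq_div]
  have hopIIpos : ∀ k, k ≠ T.root → 0 < T.opII f k := by
    intro k hk
    rw [hopII]
    refine div_pos (Finset.sum_pos ?_ ⟨k, T.mem_pathSet_self hk⟩) (hfpos k hk)
    intro l hl
    exact hcpos l (T.ne_root_of_mem_pathSet hl)
  have gval : ∀ m : ℕ, ∀ k, T.layer k ≤ m →
      g k = ∑ l ∈ (T.pathSet k).filter (fun l => T.layer l ≤ n), c l := by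
    intro m
    induction m with
    | zero =>
        intro k hk
        have hk0 : k = T.root := T.root_of_layer_zero (Nat.le_zero.mp hk)
        subst hk0
        rw [hg1 _ (by rw [T.layer_root]; omega), hf0, zero_mul, T.pathSet_root]
        simp
    | succ m ih =>
        intro k hk
        by_cases hkr : k = T.root
        · subst hkr; exact ih _ (by rw [T.layer_root]; omega)
        by_cases hkn : T.layer k ≤ n
        · rw [hg1 k hkn, hopII,
            Finset.filter_true_of_mem (fun l hl => le_trans (T.layer_le_of_mem_pathSet hl) hkn),
            mul_comm, div_mul_cancel₀ _ (ne_of_gt (hfpos k hkr))]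
        · have hkn' : n + 1 ≤ T.layer k := by omega
          have hlp : T.layer (T.parent k) ≤ m := by have := T.layer_parent k hkr; omega
          rw [hg2 k hkn', ih _ hlp, T.pathSet_insert hkr, Finset.filter_insert, if_neg hkn]
  have gdiff : ∀ k, k ≠ T.root →
      g k - g (T.parent k) = if T.layer k ≤ n then c k else 0 := by
    intro k hk
    rw [gval (T.layer k) k le_rfl, gval (T.layer (T.parent k)) (T.parent k) le_rfl,
      T.pathSet_insert hk, Finset.filter_insert]
    by_cases hkn : T.layer k ≤ n
    · rw [if_pos hkn, if_pos hkn, Finset.sum_insert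
        (fun h => T.not_mem_pathSet_parent hk (Finset.mem_of_mem_filter _ h))]
      ring
    · rw [if_neg hkn, if_neg hkn]; ring
  have hgpos : ∀ k, k ≠ T.root → 0 < g k := by
    intro k hk
    rw [gval (T.layer k) k le_rfl]
    apply Finset.sum_pos
    · intro l hl
      exact hcpos l (T.ne_root_of_mem_pathSet (Finset.mem_of_mem_filter _ hl))
    · obtain ⟨l, hl, hl1⟩ := T.exists_layer_one (T.layer k) k hk le_rfl
      exact ⟨l, Finset.mem_filter.mpr ⟨hl, by omega⟩⟩
  have hD : T.D g = ∑ l ∈ T.nonroot.filter (fun l => T.layer l ≤ n), c l * A l := by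
    rw [Finset.sum_filter]
    unfold BDTree.D
    refine Finset.sum_congr rfl fun i hi => ?_
    have hir : i ≠ T.root := by
      simpa [BDTree.nonroot] using hi
    rw [gdiff i hir]
    by_cases hin : T.layer i ≤ n
    · rw [if_pos hin, if_pos hin]
      have hmu0 : T.mu i ≠ 0 := ne_of_gt (T.mu_pos i)
      have hq0 : T.q i (T.parent i) ≠ 0 := ne_of_gt (T.q_pos_up i hir)
      simp only [hc]
      field_simp
    · rw [if_neg hin, if_neg hin]; ring
  have hRHS : (∑ k ∈ T.nonroot, T.mu k * f k * g k)
      = ∑ l ∈ T.nonroot.filter (fun l => T.layer l ≤ n), c l * A l := by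
    have step1 : ∀ k ∈ T.nonroot, T.mu k * f k * g k
        = ∑ l ∈ (T.pathSet k).filter (fun l => T.layer l ≤ n), T.mu k * f k * c l := by
      intro k _
      rw [gval (T.layer k) k le_rfl, Finset.mul_sum]
    rw [Finset.sum_congr rfl step1]
    rw [Finset.sum_comm' (s := T.nonroot)
      (t := fun k => (T.pathSet k).filter (fun l => T.layer l ≤ n))
      (t' := T.nonroot.filter (fun l => T.layer l ≤ n))
      (s' := fun l => T.subtree l) ?_]
    · refine Finset.sum_congr rfl fun l hl => ?_
      rw [← Finset.sum_mul, mul_comm]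
    · intro k l
      simp only [Finset.mem_filter, BDTree.nonroot, Finset.mem_univ, true_and]
      constructor
      · rintro ⟨hk, hl, hln⟩
        have hlr := T.ne_root_of_mem_pathSet hl
        exact ⟨(T.mem_subtree_iff hlr k).mpr hl, hlr, hln⟩
      · rintro ⟨hk, hlr, hln⟩
        exact ⟨T.ne_root_of_mem_subtree hlr hk, (T.mem_subtree_iff hlr k).mp hk, hln⟩
  have claim1 : T.D g = ∑ k ∈ T.nonroot, T.mu k * f k * g k := hD.trans hRHS.symm
  have hg0 : g T.root = 0 := by
    rw [hg1 _ (by rw [T.layer_root]; omega), hf0, zero_mul]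
  have hn2 : 0 < T.norm2 g := by
    apply Finset.sum_pos
    · intro i hi
      have hir : i ≠ T.root := by simpa [BDTree.nonroot] using hi
      exact mul_pos (T.mu_pos i) (pow_pos (hgpos i hir) 2)
    · exact hne
  have claim2 : T.lam0 ≤ T.D g / T.norm2 g := by
    have hs := hn2
    apply csInf_le
    · refine ⟨0, fun r hr => ?_⟩
      obtain ⟨h, h0, hn1, rfl⟩ := hr
      apply Finset.sum_nonneg
      intro i hi
      have hir : i ≠ T.root := by simpa [BDTree.nonroot] using hi
      exact mul_nonneg (le_of_lt (mul_pos (T.mu_pos i) (T.q_pos_up i hir))) (sq_nonneg _)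
    · refine ⟨fun i => g i * (Real.sqrt (T.norm2 g))⁻¹, by show g T.root * _ = 0; rw [hg0, zero_mul], ?_, ?_⟩
      · unfold BDTree.norm2
        have hterm : ∀ i, T.mu i * (g i * (Real.sqrt (T.norm2 g))⁻¹)^2
            = T.mu i * g i ^ 2 * (T.norm2 g)⁻¹ := fun i => by
          rw [mul_pow, inv_pow, Real.sq_sqrt hs.le]; ring
        calc (∑ i ∈ T.nonroot, T.mu i * (g i * (Real.sqrt (T.norm2 g))⁻¹)^2)
            = (∑ i ∈ T.nonroot, T.mu i * g i ^ 2) * (T.norm2 g)⁻¹ := by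
              rw [Finset.sum_mul]; exact Finset.sum_congr rfl fun i _ => hterm i
          _ = 1 := mul_inv_cancel₀ (ne_of_gt hs)
      · show T.D g / T.norm2 g = _
        unfold BDTree.D
        rw [div_eq_mul_inv, Finset.sum_mul]
        refine Finset.sum_congr rfl fun i _ => ?_
        rw [← sub_mul, mul_pow, inv_pow, Real.sq_sqrt hs.le]
        ring
  have anc : ∀ m : ℕ, ∀ k, k ≠ T.root → T.layer k ≤ m →
      ∃ k', k' ≠ T.root ∧ T.layer k' ≤ n ∧ f k = f k' ∧ g k = g k' := by
    intro m
    induction m with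
    | zero => intro k hk h; have := T.layer_pos hk; omega
    | succ m ih =>
        intro k hk hkm
        by_cases hkn : T.layer k ≤ n
        · exact ⟨k, hk, hkn, rfl, rfl⟩
        · have hk1 : n + 1 ≤ T.layer k := by omega
          have hpr : T.parent k ≠ T.root := by
            intro h
            have h2 := T.layer_parent k hk
            rw [h, T.layer_root] at h2
            omega
          obtain ⟨k', h1, h2, h3, h4⟩ := ih (T.parent k) hpr
            (by have := T.layer_parent k hk; omega)
          exact ⟨k', h1, h2, (hfn k hk1).trans h3, (hg2 k hk1).trans h4⟩
  have claim3 : T.D g / T.norm2 g ≤ M := by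
    rw [div_le_iff₀ hn2, claim1]
    have hterm : ∀ k ∈ T.nonroot, T.mu k * f k * g k ≤ M * (T.mu k * g k ^ 2) := by
      intro k hk
      have hkr : k ≠ T.root := by simpa [BDTree.nonroot] using hk
      obtain ⟨k', h1, h2, h3, h4⟩ := anc (T.layer k) k hkr le_rfl
      have hM' : (T.opII f k')⁻¹ ≤ M := by
        rw [hM]
        exact Finset.le_sup' (fun k => (T.opII f k)⁻¹)
          (by simp [BDTree.nonroot, h1])
      have hop := hopIIpos k' h1
      have hgk' : g k' = f k' * T.opII f k' := hg1 k' h2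
      rw [h3, h4, hgk']
      have key : f k' * (f k' * T.opII f k') ≤ M * (f k' * T.opII f k') ^ 2 := by
        have h5 : (T.opII f k')⁻¹ * (f k' * T.opII f k') ^ 2
            = f k' * (f k' * T.opII f k') := by
          field_simp
        calc f k' * (f k' * T.opII f k')
            = (T.opII f k')⁻¹ * (f k' * T.opII f k') ^ 2 := h5.symm
          _ ≤ M * (f k' * T.opII f k') ^ 2 :=
              mul_le_mul_of_nonneg_right hM' (sq_nonneg _)
      calc T.mu k * f k' * (f k' * T.opII f k')
          = T.mu k * (f k' * (f k' * T.opII f k')) := by ring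
        _ ≤ T.mu k * (M * (f k' * T.opII f k') ^ 2) :=
            mul_le_mul_of_nonneg_left key (T.mu_pos k).le
        _ = M * (T.mu k * (f k' * T.opII f k') ^ 2) := by ring
    calc (∑ k ∈ T.nonroot, T.mu k * f k * g k)
        ≤ ∑ k ∈ T.nonroot, M * (T.mu k * g k ^ 2) := Finset.sum_le_sum hterm
      _ = M * T.norm2 g := by rw [← Finset.mul_sum]; rfl
  exact ⟨claim1, claim2, claim3, claim2.trans claim3⟩
end

section
/- (Summation identity on the subtree.) For any function f on a tree T with finite subtree sums, Σ_{j∈T_i} μ_j f_j = μ(T_i) f_i + Σ_{k ∈ T_{J(i)}} μ(T_k)(f_k - f_{k*}), where T_{J(i)} = ⋃_{s∈J(i)} T_s and μ(T_j) = Σ_{k∈T_j} μ_k. -/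
open Finset
open scoped Classical

namespace BDTree

variable {V : Type*} [Fintype V] (T : BDTree V)

lemma mem_subtree' {j k : V} : j ∈ T.subtree k ↔ ∃ n, T.parent^[n] j = k := by
  simp [subtree]

lemma self_mem_subtree' (k : V) : k ∈ T.subtree k := T.mem_subtree'.2 ⟨0, rfl⟩

lemma subtree_trans' {a b c : V} (h1 : a ∈ T.subtree b) (h2 : b ∈ T.subtree c) :
    a ∈ T.subtree c := by
  obtain ⟨n, hn⟩ := T.mem_subtree'.1 h1
  obtain ⟨m, hm⟩ := T.mem_subtree'.1 h2
  exact T.mem_subtree'.2 ⟨m + n, by rw [Function.iterate_add_apply, hn, hm]⟩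

lemma layer_parent_le' (x : V) : T.layer (T.parent x) ≤ T.layer x := by
  by_cases h : x = T.root
  · subst h; rw [T.parent_root]
  · rw [T.layer_parent x h]; omega

lemma layer_iterate_le' (n : ℕ) (x : V) : T.layer (T.parent^[n] x) ≤ T.layer x := by
  induction n with
  | zero => simp
  | succ n ih => rw [Function.iterate_succ_apply']; exact (T.layer_parent_le' _).trans ih

lemma layer_le_of_mem_subtree' {j k : V} (h : j ∈ T.subtree k) : T.layer k ≤ T.layer j := by
  obtain ⟨n, hn⟩ := T.mem_subtree'.1 h
  rw [← hn]; exact T.layer_iterate_le' n j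

lemma iterate_parent_root' (n : ℕ) : T.parent^[n] T.root = T.root := by
  induction n with
  | zero => rfl
  | succ n ih => rw [Function.iterate_succ_apply, T.parent_root, ih]

lemma eq_of_iterate_of_layer' :
    ∀ (n : ℕ) (j k : V), T.parent^[n] j = k → T.layer k = T.layer j → j = k := by
  intro n
  induction n with
  | zero => intro j k h _; exact h
  | succ n ih =>
    intro j k h hl
    rw [Function.iterate_succ_apply] at h
    by_cases hr : j = T.root
    · subst hr
      rw [T.parent_root] at h
      rw [T.iterate_parent_root'] at h
      exact h
    · exfalso
      have h1 : T.layer k ≤ T.layer (T.parent j) := by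
        rw [← h]; exact T.layer_iterate_le' n _
      have h2 : T.layer j = T.layer (T.parent j) + 1 := T.layer_parent j hr
      omega

lemma subtree_antisymm' {j k : V} (h1 : j ∈ T.subtree k) (h2 : k ∈ T.subtree j) : j = k := by
  obtain ⟨n, hn⟩ := T.mem_subtree'.1 h1
  have hjk := T.layer_le_of_mem_subtree' h1
  have hkj := T.layer_le_of_mem_subtree' h2
  exact T.eq_of_iterate_of_layer' n j k hn (le_antisymm hjk hkj)

lemma root_mem_subtree' {i : V} (h : T.root ∈ T.subtree i) : i = T.root := by
  obtain ⟨n, hn⟩ := T.mem_subtree'.1 h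
  rw [T.iterate_parent_root'] at hn
  exact hn.symm

/-- If `j` is in the subtree of `i` and `j ≠ i`, then `j` is in the subtree of some son. -/
lemma mem_sons_subtree' {i j : V} (hj : j ∈ T.subtree i) (hne : j ≠ i) :
    ∃ s ∈ T.sons i, j ∈ T.subtree s := by
  obtain ⟨n, hn⟩ := T.mem_subtree'.1 hj
  induction n generalizing j with
  | zero => exact absurd hn hne
  | succ n ih =>
    rw [Function.iterate_succ_apply'] at hn
    set y := T.parent^[n] j with hy
    by_cases hyi : y = i
    · exact ih hj hne hyi
    · have hyr : y ≠ T.root := by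
        intro h
        rw [h, T.parent_root] at hn
        exact hyi (h.trans hn)
      refine ⟨y, ?_, T.mem_subtree'.2 ⟨n, rfl⟩⟩
      simp only [sons, Finset.mem_filter, Finset.mem_univ, true_and]
      exact ⟨hyr, hn⟩

lemma parent_mem_subtree' {i j : V} (hj : j ∈ T.subtree i) (hne : j ≠ i) :
    T.parent j ∈ T.subtree i := by
  obtain ⟨n, hn⟩ := T.mem_subtree'.1 hj
  cases n with
  | zero => exact absurd hn hne
  | succ n => exact T.mem_subtree'.2 ⟨n, by rwa [Function.iterate_succ_apply] at hn⟩

lemma not_mem_subtree_of_sons' {i k : V} (hk : k ∈ (T.sons i).biUnion T.subtree) :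
    i ∉ T.subtree k := by
  intro hik
  obtain ⟨s, hs, hks⟩ := Finset.mem_biUnion.1 hk
  simp only [sons, Finset.mem_filter, Finset.mem_univ, true_and] at hs
  have hsi : s ∈ T.subtree i := T.mem_subtree'.2 ⟨1, by simpa using hs.2⟩
  have his : i ∈ T.subtree s := T.subtree_trans' hik hks
  have hsi' : s = i := T.subtree_antisymm' hsi his
  have hps : T.parent s = s := hs.2.trans hsi'.symm
  have hl := T.layer_parent s hs.1
  rw [hps] at hl
  omega

/-- Telescoping lemma. -/
lemma tele' (f : V → ℝ) (i : V) (j : V) (hj : j ∈ T.subtree i) :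
    ∑ k ∈ ((T.sons i).biUnion T.subtree).filter (fun k => j ∈ T.subtree k),
      (f k - f (T.parent k)) = f j - f i := by
  suffices H : ∀ n j, j ∈ T.subtree i → T.layer j = n →
      ∑ k ∈ ((T.sons i).biUnion T.subtree).filter (fun k => j ∈ T.subtree k),
        (f k - f (T.parent k)) = f j - f i from H _ j hj rfl
  intro n
  induction n using Nat.strong_induction_on with
  | _ n ih =>
  intro j hj hn
  by_cases hji : j = i
  · subst hji
    rw [Finset.filter_false_of_mem, Finset.sum_empty, sub_self]
    intro k hk
    exact T.not_mem_subtree_of_sons' hk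
  · have hjr : j ≠ T.root := by
      intro h
      subst h
      exact hji (T.root_mem_subtree' hj).symm
    have hpj : T.parent j ∈ T.subtree i := T.parent_mem_subtree' hj hji
    have hlay : T.layer (T.parent j) < T.layer j := by
      have := T.layer_parent j hjr; omega
    have hset : ((T.sons i).biUnion T.subtree).filter (fun k => j ∈ T.subtree k)
        = insert j (((T.sons i).biUnion T.subtree).filter
            (fun k => T.parent j ∈ T.subtree k)) := by
      ext k
      simp only [Finset.mem_insert, Finset.mem_filter]
      constructor
      · rintro ⟨hkB, hjk⟩
        by_cases hkj : k = j
        · exact Or.inl hkj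
        · obtain ⟨m, hm⟩ := T.mem_subtree'.1 hjk
          cases m with
          | zero => exact absurd hm.symm hkj
          | succ m =>
            exact Or.inr ⟨hkB, T.mem_subtree'.2 ⟨m, by rwa [Function.iterate_succ_apply] at hm⟩⟩
      · rintro (rfl | ⟨hkB, hpk⟩)
        · obtain ⟨s, hs, hjs⟩ := T.mem_sons_subtree' hj hji
          exact ⟨Finset.mem_biUnion.2 ⟨s, hs, hjs⟩, T.self_mem_subtree' _⟩
        · exact ⟨hkB, T.subtree_trans' (T.mem_subtree'.2 ⟨1, rfl⟩) hpk⟩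
    have hjnot : j ∉ ((T.sons i).biUnion T.subtree).filter
        (fun k => T.parent j ∈ T.subtree k) := by
      intro h
      have hpjj : T.parent j ∈ T.subtree j := (Finset.mem_filter.1 h).2
      have hjpj : j ∈ T.subtree (T.parent j) := T.mem_subtree'.2 ⟨1, rfl⟩
      have heq : j = T.parent j := T.subtree_antisymm' hjpj hpjj
      have h2 := T.layer_parent j hjr
      rw [← heq] at h2
      omega
    rw [hset, Finset.sum_insert hjnot, ih _ (hn ▸ hlay) _ hpj rfl]
    ring


end BDTree
/-- the summation identity on the subtree. -/
theorem stmt12 {V : Type*} [Fintype V] (T : BDTree V) (f : V → ℝ) (i : V) :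
    ∑ j ∈ T.subtree i, T.mu j * f j =
      (∑ k ∈ T.subtree i, T.mu k) * f i +
        ∑ k ∈ (T.sons i).biUnion (fun s => T.subtree s),
          (∑ j ∈ T.subtree k, T.mu j) * (f k - f (T.parent k)) := by
  classical
  set B := (T.sons i).biUnion (fun s => T.subtree s) with hB
  have hBsub : ∀ k ∈ B, ∀ j ∈ T.subtree k, j ∈ T.subtree i := by
    intro k hk j hj
    obtain ⟨s, hs, hks⟩ := Finset.mem_biUnion.1 hk
    simp only [BDTree.sons, Finset.mem_filter, Finset.mem_univ, true_and] at hs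
    have hsi : s ∈ T.subtree i := T.mem_subtree'.2 ⟨1, by simpa using hs.2⟩
    exact T.subtree_trans' (T.subtree_trans' hj hks) hsi
  have key : ∀ k ∈ B, (T.subtree i).filter (fun j => j ∈ T.subtree k) = T.subtree k := by
    intro k hk
    ext j
    simp only [Finset.mem_filter]
    exact ⟨fun h => h.2, fun h => ⟨hBsub k hk j h, h⟩⟩
  have main : ∑ j ∈ T.subtree i, T.mu j * (f j - f i)
      = ∑ k ∈ B, (∑ j ∈ T.subtree k, T.mu j) * (f k - f (T.parent k)) := by
    calc ∑ j ∈ T.subtree i, T.mu j * (f j - f i)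
        = ∑ j ∈ T.subtree i, T.mu j *
            ∑ k ∈ B.filter (fun k => j ∈ T.subtree k), (f k - f (T.parent k)) :=
          Finset.sum_congr rfl fun j hj => by rw [T.tele' f i j hj]
      _ = ∑ j ∈ T.subtree i, ∑ k ∈ B,
            (if j ∈ T.subtree k then T.mu j * (f k - f (T.parent k)) else 0) := by
          refine Finset.sum_congr rfl fun j hj => ?_
          rw [Finset.mul_sum, Finset.sum_filter]
      _ = ∑ k ∈ B, ∑ j ∈ T.subtree i,
            (if j ∈ T.subtree k then T.mu j * (f k - f (T.parent k)) else 0) :=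
          Finset.sum_comm
      _ = ∑ k ∈ B, (∑ j ∈ T.subtree k, T.mu j) * (f k - f (T.parent k)) := by
          refine Finset.sum_congr rfl fun k hk => ?_
          rw [← Finset.sum_filter, key k hk, ← Finset.sum_mul]
  have expand : ∑ j ∈ T.subtree i, T.mu j * (f j - f i)
      = ∑ j ∈ T.subtree i, T.mu j * f j - (∑ k ∈ T.subtree i, T.mu k) * f i := by
    rw [Finset.sum_mul, ← Finset.sum_sub_distrib]
    exact Finset.sum_congr rfl fun j _ => by ring
  rw [expand] at main
  linarith [main]
end
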